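/- If the principal solution X* = ⊕'_{k=1}^p A_k♯ ⊗' C ⊗' B_k♯ is not a solution of ⊕_{k=1}^p A_k ⊗ X ⊗ B_k = C, then the equation has no solution at all; equivalently, any solution X satisfies X ≤ X* and ⊕_k A_k ⊗ X* ⊗ B_k = C. -/

import Mathlib

/-- Min-plus addition on `EReal`: agrees with `+` on finite values, with `⊤` absorbing. -/
noncomputable def mpAdd (a b : EReal) : EReal := -((-a) + (-b))

/-- Max-plus matrix multiplication. -/
noncomputable def maxMul {α β γ : Type*} [Fintype β]
    (A : Matrix α β EReal) (B : Matrix β γ EReal) : Matrix α γ EReal :=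
  fun i j => ⨆ k, A i k + B k j

/-- Min-plus matrix multiplication. -/
noncomputable def minMul {α β γ : Type*} [Fintype β]
    (A : Matrix α β EReal) (B : Matrix β γ EReal) : Matrix α γ EReal :=
  fun i j => ⨅ k, mpAdd (A i k) (B k j)

/-- Max-plus matrix-vector multiplication. -/
noncomputable def maxMulVec {α β : Type*} [Fintype β]
    (A : Matrix α β EReal) (x : β → EReal) : α → EReal :=
  fun i => ⨆ j, A i j + x j

/-- Min-plus matrix-vector multiplication. -/
noncomputable def minMulVec {α β : Type*} [Fintype β]
    (A : Matrix α β EReal) (x : β → EReal) : α → EReal :=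
  fun i => ⨅ j, mpAdd (A i j) (x j)

/-- Conjugate `A♯ = -Aᵀ` (sending `-∞` to `+∞` and vice versa). -/
noncomputable def conj {α β : Type*} (A : Matrix α β EReal) : Matrix β α EReal :=
  fun j i => -(A i j)

/-- Max-plus Kronecker product: block `(i,k),(j,l)` entry is `A i j + B k l`. -/
noncomputable def kron {α β γ δ : Type*} (A : Matrix α β EReal) (B : Matrix γ δ EReal) :
    Matrix (α × γ) (β × δ) EReal :=
  fun ik jl => A ik.1 jl.1 + B ik.2 jl.2

/-- Min-plus Kronecker product. -/
noncomputable def minKron {α β γ δ : Type*} (A : Matrix α β EReal) (B : Matrix γ δ EReal) :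
    Matrix (α × γ) (β × δ) EReal :=
  fun ik jl => mpAdd (A ik.1 jl.1) (B ik.2 jl.2)

/-- Column-stacking vectorization: `vec X (j, i) = X i j`. -/
def vec {α β : Type*} (X : Matrix α β EReal) : β × α → EReal := fun p => X p.2 p.1

/-- Entries lie in `ℝ ∪ {-∞}`, i.e. no `+∞` entries. -/
def RMaxEntries {α β : Type*} (A : Matrix α β EReal) : Prop := ∀ i j, A i j ≠ ⊤

/-- Doubly ℝ-astic: entries in `ℝ ∪ {-∞}`, with a finite entry in each row and column. -/
def DoublyRAstic {α β : Type*} (A : Matrix α β EReal) : Prop :=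
  (∀ i j, A i j ≠ ⊤) ∧ (∀ i, ∃ j, A i j ≠ ⊥) ∧ (∀ j, ∃ i, A i j ≠ ⊥)

/-- All entries of the matrix are finite reals. -/
def FiniteEntries {α β : Type*} (C : Matrix α β EReal) : Prop :=
  ∀ i j, ∃ r : ℝ, C i j = (r : EReal)

/-- All entries of the vector are finite reals. -/
def FiniteVec {α : Type*} (b : α → EReal) : Prop := ∀ i, ∃ r : ℝ, b i = (r : EReal)

lemma mpAdd_comm' (a b : EReal) : mpAdd a b = mpAdd b a := by simp [mpAdd, add_comm]

lemma mpAdd_mono_right' (a : EReal) {b b' : EReal} (h : b ≤ b') : mpAdd a b ≤ mpAdd a b' := by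
  simp only [mpAdd]
  exact EReal.neg_le_neg_iff.mpr (add_le_add_right (EReal.neg_le_neg_iff.mpr h) _)

lemma resid' (a b c : EReal) : a + b ≤ c ↔ b ≤ mpAdd (-a) c := by
  simp only [mpAdd, neg_neg]
  induction a using EReal.rec <;> induction b using EReal.rec <;> induction c using EReal.rec <;>
    simp_all [← EReal.coe_add, ← EReal.coe_neg, EReal.coe_le_coe_iff]
  constructor <;> intro h <;> linarith

section main
variable {m n p : ℕ} (A : Fin p → Matrix (Fin m) (Fin m) EReal)
    (B : Fin p → Matrix (Fin n) (Fin n) EReal) (C : Matrix (Fin m) (Fin n) EReal)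

lemma le_Xstar' (X : Matrix (Fin m) (Fin n) EReal) (i : Fin m) (j : Fin n)
    (h : ∀ k s t, A k s i + (X i j + B k j t) ≤ C s t) :
    X i j ≤ ⨅ k', minMul (conj (A k')) (minMul C (conj (B k'))) i j := by
  refine le_iInf fun k => le_iInf fun s => ?_
  show X i j ≤ mpAdd (-(A k s i)) (minMul C (conj (B k)) s j)
  rw [← resid']
  show A k s i + X i j ≤ ⨅ t, mpAdd (C s t) (conj (B k) t j)
  refine le_iInf fun t => ?_
  rw [show conj (B k) t j = -(B k j t) from rfl, mpAdd_comm', ← resid']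
  calc B k j t + (A k s i + X i j) = A k s i + (X i j + B k j t) := by abel
    _ ≤ C s t := h k s t

lemma Xstar_bound' (k : Fin p) (s : Fin m) (t : Fin n) (i : Fin m) (j : Fin n) :
    A k s i + ((⨅ k', minMul (conj (A k')) (minMul C (conj (B k'))) i j) + B k j t) ≤ C s t := by
  have h1 : (⨅ k', minMul (conj (A k')) (minMul C (conj (B k'))) i j)
      ≤ mpAdd (-(A k s i)) (mpAdd (-(B k j t)) (C s t)) := by
    refine le_trans (iInf_le _ k) ?_
    refine le_trans (iInf_le _ s) (mpAdd_mono_right' _ ?_)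
    exact le_trans (iInf_le _ t) (le_of_eq (mpAdd_comm' _ _))
  have h2 := (resid' _ _ _).mpr h1
  have h3 := (resid' _ _ _).mpr h2
  calc A k s i + ((⨅ k', minMul (conj (A k')) (minMul C (conj (B k'))) i j) + B k j t)
      = B k j t + (A k s i + (⨅ k', minMul (conj (A k')) (minMul C (conj (B k'))) i j)) := by abel
    _ ≤ C s t := h3

end main

theorem stmt18 {m n p : ℕ} (A : Fin p → Matrix (Fin m) (Fin m) EReal)
    (B : Fin p → Matrix (Fin n) (Fin n) EReal) (C : Matrix (Fin m) (Fin n) EReal)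
    (hA : ∀ k, DoublyRAstic (A k)) (hB : ∀ k, DoublyRAstic (B k)) (hC : FiniteEntries C) :
    ((fun i j => ⨆ k, maxMul (A k) (maxMul
        (fun i' j' => ⨅ k', minMul (conj (A k')) (minMul C (conj (B k'))) i' j')
        (B k)) i j) ≠ C →
      ¬ ∃ X : Matrix (Fin m) (Fin n) EReal, RMaxEntries X ∧
        (fun i j => ⨆ k, maxMul (A k) (maxMul X (B k)) i j) = C) ∧
    (∀ X : Matrix (Fin m) (Fin n) EReal, RMaxEntries X →
      (fun i j => ⨆ k, maxMul (A k) (maxMul X (B k)) i j) = C →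
      (∀ i j, X i j ≤ ⨅ k', minMul (conj (A k')) (minMul C (conj (B k'))) i j) ∧
      (fun i j => ⨆ k, maxMul (A k) (maxMul
        (fun i' j' => ⨅ k', minMul (conj (A k')) (minMul C (conj (B k'))) i' j')
        (B k)) i j) = C) := by
  -- the main part : part 2
  have main : ∀ X : Matrix (Fin m) (Fin n) EReal,
      (fun i j => ⨆ k, maxMul (A k) (maxMul X (B k)) i j) = C →
      (∀ i j, X i j ≤ ⨅ k', minMul (conj (A k')) (minMul C (conj (B k'))) i j) ∧
      (fun i j => ⨆ k, maxMul (A k) (maxMul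
        (fun i' j' => ⨅ k', minMul (conj (A k')) (minMul C (conj (B k'))) i' j')
        (B k)) i j) = C := by
    intro X hsol
    have hterm : ∀ k (s : Fin m) (t : Fin n) (i : Fin m) (j : Fin n),
        A k s i + (X i j + B k j t) ≤ C s t := by
      intro k s t i j
      have h1 : A k s i + (X i j + B k j t) ≤ maxMul (A k) (maxMul X (B k)) s t := by
        refine le_trans ?_ (le_iSup _ i)
        exact add_le_add_right (le_iSup (fun j' => X i j' + B k j' t) j) _
      refine le_trans h1 ?_
      calc maxMul (A k) (maxMul X (B k)) s t
          ≤ ⨆ k', maxMul (A k') (maxMul X (B k')) s t :=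
            le_iSup (fun k' => maxMul (A k') (maxMul X (B k')) s t) k
        _ = C s t := by rw [← hsol]
    have hle : ∀ i j, X i j ≤ ⨅ k', minMul (conj (A k')) (minMul C (conj (B k'))) i j :=
      fun i j => le_Xstar' A B C X i j (fun k s t => hterm k s t i j)
    refine ⟨hle, ?_⟩
    funext s t
    refine le_antisymm ?_ ?_
    · -- F Xstar ≤ C : unconditional
      refine iSup_le fun k => iSup_le fun i => ?_
      rw [resid']
      refine iSup_le fun j => ?_
      rw [← resid']
      exact Xstar_bound' A B C k s t i j
    · -- C ≤ F Xstar using C = F X and X ≤ Xstar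
      have : C s t = ⨆ k, maxMul (A k) (maxMul X (B k)) s t := by rw [← hsol]
      rw [this]
      refine iSup_mono fun k => iSup_mono fun i => add_le_add_right (iSup_mono fun j => ?_) _
      exact add_le_add_left (hle i j) _
  refine ⟨?_, fun X _ hsol => main X hsol⟩
  intro hne ⟨X, _, hsol⟩
  exact hne (main X hsol).2
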